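/- Let n ≥ 2 and let G be the directed path graph with node set {1, …, n}, edge set {(i, i+1) : 1 ≤ i ≤ n−1}, and identical edge likelihoods p(i, i+1) = 1 − 1/n. For the seed set S = {1}: f^corr({1}) = 1 + (n−1)/2 and f^ic({1}) = Σ_{i=0}^{n−1} (1 − 1/n)^i = n·(1 − (1 − 1/n)^n). -/

import Mathlib

open scoped BigOperators

namespace CorrIM

variable {V : Type*} [Fintype V] [DecidableEq V]

/-- A node `i` is influenced: `i ∈ S`, or `i` is reachable from some node of `S`
along the live edges of the scenario `c`. -/
def influenced (c : Finset (V × V)) (S : Finset V) (i : V) : Prop :=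
  ∃ s ∈ S, Relation.ReflTransGen (fun a b : V => (a, b) ∈ c) s i

/-- `R c S` : the number of influenced nodes in scenario `c` with seed set `S`. -/
noncomputable def R (c : Finset (V × V)) (S : Finset V) : ℕ :=
  Set.ncard {i : V | influenced c S i}

/-- The Fréchet class `Θ` : probability distributions on scenarios (subsets of `E`)
whose marginals agree with the edge likelihoods `p`. -/
def memTheta (E : Finset (V × V)) (p : V × V → ℝ) (θ : Finset (V × V) → ℝ) : Prop :=
  (∀ c, 0 ≤ θ c) ∧ (∀ c, θ c ≠ 0 → c ⊆ E) ∧ (∑ c : Finset (V × V), θ c) = 1 ∧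
    ∀ e ∈ E, (∑ c : Finset (V × V), if e ∈ c then θ c else 0) = p e

/-- Expected number of influenced nodes under the distribution `θ`. -/
noncomputable def expInf (θ : Finset (V × V) → ℝ) (S : Finset V) : ℝ :=
  ∑ c : Finset (V × V), θ c * (R c S : ℝ)

/-- The correlation robust influence function `f^corr`. -/
noncomputable def fcorr (E : Finset (V × V)) (p : V × V → ℝ) (S : Finset V) : ℝ :=
  sInf {x : ℝ | ∃ θ, memTheta E p θ ∧ x = expInf θ S}

open Classical in
/-- Probability of the event `A` under the distribution `θ`. -/
noncomputable def prob (θ : Finset (V × V) → ℝ) (A : Finset (V × V) → Prop) : ℝ :=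
  ∑ c : Finset (V × V), if A c then θ c else 0

/-- `γ` (a list of nodes `i₀, i₁, …, i_λ`, `λ ≥ 1`) is a directed path from the
seed set `S` to the node `i` using edges of `E`. -/
def IsPathFrom (E : Finset (V × V)) (S : Finset V) (i : V) (γ : List V) : Prop :=
  2 ≤ γ.length ∧ (∃ s ∈ S, γ.head? = some s) ∧ γ.getLast? = some i ∧
    γ.Chain' (fun a b : V => (a, b) ∈ E)

/-- The list of edges `(i₀,i₁), …, (i_{λ-1}, i_λ)` of a path `γ = [i₀, …, i_λ]`. -/
def pathEdges (γ : List V) : List (V × V) := γ.zip γ.tail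

/-- The weight `L(γ) = 1 - ∑_{l=1}^{λ} (1 - p(i_{l-1}, i_l))` of a path. -/
noncomputable def L (p : V × V → ℝ) (γ : List V) : ℝ :=
  1 - ((pathEdges γ).map (fun e => 1 - p e)).sum

/-- `π*_i = max(0, max_{γ ∈ Γ(S,i)} L(γ))`, with value `0` when `Γ(S,i) = ∅`. -/
noncomputable def piStar (E : Finset (V × V)) (p : V × V → ℝ) (S : Finset V) (i : V) : ℝ :=
  sSup (insert 0 {x : ℝ | ∃ γ : List V, IsPathFrom E S i γ ∧ x = L p γ})

/-- The independent cascade distribution `θ_ic` : each edge of `E` is live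
independently with probability `p e`. -/
noncomputable def thetaIC (E : Finset (V × V)) (p : V × V → ℝ) (c : Finset (V × V)) : ℝ :=
  if c ⊆ E then (∏ e ∈ c, p e) * ∏ e ∈ E \ c, (1 - p e) else 0

/-- The independent cascade influence function `f^ic`. -/
noncomputable def fic (E : Finset (V × V)) (p : V × V → ℝ) (S : Finset V) : ℝ :=
  expInf (thetaIC E p) S


/-! ### Auxiliary material for `series_example` -/

/-- The edge set of the directed path graph on `Fin n`. -/
def pathE (n : ℕ) : Finset (Fin n × Fin n) :=
  Finset.univ.filter (fun e : Fin n × Fin n => (e.2 : ℕ) = (e.1 : ℕ) + 1)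

lemma mem_pathE {n : ℕ} {a b : Fin n} : (a, b) ∈ pathE n ↔ (b : ℕ) = (a : ℕ) + 1 := by
  simp [pathE]

lemma mem_pathE' {n : ℕ} {e : Fin n × Fin n} : e ∈ pathE n ↔ (e.2 : ℕ) = (e.1 : ℕ) + 1 := by
  simp [pathE]

/-- The set of edges of the path needed to reach node `i` from node `0`. -/
def Ai (n : ℕ) (i : Fin n) : Finset (Fin n × Fin n) :=
  (pathE n).filter (fun e => (e.2 : ℕ) ≤ (i : ℕ))

lemma Ai_subset (n : ℕ) (i : Fin n) : Ai n i ⊆ pathE n := Finset.filter_subset _ _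

lemma inf_iff {n : ℕ} (hn : 0 < n) (c : Finset (Fin n × Fin n)) (hc : c ⊆ pathE n)
    (i : Fin n) :
    influenced c {(⟨0, hn⟩ : Fin n)} i ↔
      ∀ a b : Fin n, (b : ℕ) = (a : ℕ) + 1 → (b : ℕ) ≤ (i : ℕ) → (a, b) ∈ c := by
  constructor
  · rintro ⟨s, hs, hpath⟩
    simp only [Finset.mem_singleton] at hs
    subst hs
    induction hpath with
    | refl => intro a b hab hle; simp at hle; omega
    | tail _ hstep ih =>
      rename_i b' i' _
      have hb' : (i' : ℕ) = (b' : ℕ) + 1 := mem_pathE.mp (hc hstep)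
      intro a b hab hle
      rcases lt_or_eq_of_le hle with h | h
      · exact ih a b hab (by omega)
      · have hb : b = i' := Fin.ext (by omega)
        have ha : a = b' := Fin.ext (by omega)
        rw [ha, hb]; exact hstep
  · intro h
    refine ⟨_, Finset.mem_singleton_self _, ?_⟩
    suffices H : ∀ m : ℕ, ∀ hm : m < n, (∀ a b : Fin n, (b : ℕ) = (a : ℕ) + 1 →
        (b : ℕ) ≤ m → (a, b) ∈ c) →
        Relation.ReflTransGen (fun a b : Fin n => (a, b) ∈ c) ⟨0, hn⟩ ⟨m, hm⟩ by
      have := H i.val i.isLt h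
      simpa using this
    intro m
    induction m with
    | zero => intro hm _; exact Relation.ReflTransGen.refl
    | succ m ih =>
      intro hm hQ
      have hmlt : m < n := by omega
      refine Relation.ReflTransGen.tail (ih hmlt (fun a b hab hle => hQ a b hab (by omega))) ?_
      exact hQ ⟨m, hmlt⟩ ⟨m+1, hm⟩ rfl (le_refl _)

lemma inf_iff_subset {n : ℕ} (hn : 0 < n) (c : Finset (Fin n × Fin n)) (hc : c ⊆ pathE n)
    (i : Fin n) :
    influenced c {(⟨0, hn⟩ : Fin n)} i ↔ Ai n i ⊆ c := by
  rw [inf_iff hn c hc i]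
  constructor
  · intro h e he
    simp only [Ai, Finset.mem_filter] at he
    obtain ⟨heE, hle⟩ := he
    exact h e.1 e.2 (mem_pathE'.mp heE) hle
  · intro h a b hab hle
    exact h (Finset.mem_filter.mpr ⟨mem_pathE.mpr hab, hle⟩)

open Classical in
lemma R_eq {n : ℕ} (hn : 0 < n) (c : Finset (Fin n × Fin n)) (hc : c ⊆ pathE n) :
    (R c {(⟨0, hn⟩ : Fin n)} : ℝ) = ∑ i : Fin n, (if Ai n i ⊆ c then (1 : ℝ) else 0) := by
  rw [R]
  have h1 : {i : Fin n | influenced c {(⟨0, hn⟩ : Fin n)} i}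
      = ↑(Finset.univ.filter (fun i : Fin n => Ai n i ⊆ c)) := by
    ext i
    simp [inf_iff_subset hn c hc i]
  rw [h1, Set.ncard_coe_finset, Finset.sum_boole]

/-- counting: values of `Fin n` lying in a set `s` of naturals all `< n` -/
lemma card_filter_val_mem {n : ℕ} (s : Finset ℕ) (hs : ∀ m ∈ s, m < n) :
    (Finset.univ.filter (fun i : Fin n => (i : ℕ) ∈ s)).card = s.card := by
  apply Finset.card_nbij (i := fun i : Fin n => (i : ℕ))
  · intro a ha; simp only [Finset.mem_coe, Finset.coe_filter, Finset.mem_filter, Set.mem_setOf_eq] at ha; exact ha.2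
  · intro a _ b _ hab; exact Fin.ext hab
  · intro m hm
    rw [Finset.mem_coe] at hm
    exact ⟨⟨m, hs m hm⟩, by simp [hm], rfl⟩

/-- card of the set of edges whose head value lies in a set `s ⊆ [1, n-1]` -/
lemma card_filter_pathE {n : ℕ} (s : Finset ℕ) (hs : ∀ m ∈ s, 1 ≤ m ∧ m < n) :
    ((pathE n).filter (fun e => (e.2 : ℕ) ∈ s)).card = s.card := by
  apply Finset.card_nbij (i := fun e : Fin n × Fin n => (e.2 : ℕ))
  · intro a ha; simp only [Finset.mem_coe, Finset.coe_filter, Finset.mem_filter, Set.mem_setOf_eq] at ha; exact ha.2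
  · intro a ha b hb hab
    simp only [Set.mem_setOf_eq, Finset.coe_filter, pathE, Finset.mem_filter,
      Finset.mem_univ, true_and] at ha hb
    have h2 : a.2 = b.2 := Fin.ext hab
    have h1 : a.1 = b.1 := Fin.ext (by omega)
    exact Prod.ext h1 h2
  · intro m hm
    simp only [Finset.coe_filter, Set.mem_setOf_eq]
    rw [Finset.mem_coe] at hm
    obtain ⟨h1, h2⟩ := hs m hm
    refine ⟨(⟨m - 1, by omega⟩, ⟨m, h2⟩), ⟨?_, hm⟩, rfl⟩
    simp [pathE]; omega

lemma card_Ai {n : ℕ} (i : Fin n) : (Ai n i).card = (i : ℕ) := by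
  have h1 : Ai n i = (pathE n).filter (fun e => (e.2 : ℕ) ∈ Finset.Icc 1 (i : ℕ)) := by
    apply Finset.filter_congr
    intro e he
    have : (e.2 : ℕ) = (e.1 : ℕ) + 1 := mem_pathE'.mp he
    simp only [Finset.mem_Icc]
    constructor
    · intro h; exact ⟨by omega, h⟩
    · intro h; exact h.2
  rw [h1, card_filter_pathE]
  · simp [Nat.card_Icc]
  · intro m hm
    simp only [Finset.mem_Icc] at hm
    have := i.isLt
    omega

lemma sum_thetaIC_subset (E A : Finset (V × V)) (p : V × V → ℝ) (hA : A ⊆ E) :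
    ∑ c : Finset (V × V), thetaIC E p c * (if A ⊆ c then (1 : ℝ) else 0)
      = ∏ e ∈ A, p e := by
  classical
  have h1 : ∀ c : Finset (V × V), thetaIC E p c * (if A ⊆ c then (1 : ℝ) else 0)
      = if A ⊆ c ∧ c ⊆ E then (∏ e ∈ c, p e) * ∏ e ∈ E \ c, (1 - p e) else 0 := by
    intro c
    unfold thetaIC
    by_cases h1 : A ⊆ c <;> by_cases h2 : c ⊆ E <;> simp [h1, h2]
  rw [Finset.sum_congr rfl (fun c _ => h1 c), ← Finset.sum_filter]
  have h2 : ∑ d ∈ (E \ A).powerset,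
      ((∏ e ∈ A ∪ d, p e) * ∏ e ∈ E \ (A ∪ d), (1 - p e)) = ∏ e ∈ A, p e := by
    have key : ∀ d ∈ (E \ A).powerset,
        (∏ e ∈ A ∪ d, p e) * ∏ e ∈ E \ (A ∪ d), (1 - p e)
          = (∏ e ∈ A, p e) * ((∏ e ∈ d, p e) * ∏ e ∈ (E \ A) \ d, (1 - p e)) := by
      intro d hd
      rw [Finset.mem_powerset] at hd
      have hdisj : Disjoint A d := by
        refine Finset.disjoint_left.mpr (fun x hx hxd => ?_)
        have := hd hxd
        simp only [Finset.mem_sdiff] at this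
        exact this.2 hx
      have hsd : E \ (A ∪ d) = (E \ A) \ d := by
        ext x; simp only [Finset.mem_sdiff, Finset.mem_union]; tauto
      rw [Finset.prod_union hdisj, hsd]; ring
    rw [Finset.sum_congr rfl key, ← Finset.mul_sum, ← Finset.prod_add]
    simp
  have hun : ∀ c : Finset (V × V), A ⊆ c → A ∪ (c \ A) = c := by
    intro c hc
    ext x; simp only [Finset.mem_union, Finset.mem_sdiff]
    constructor
    · rintro (h | ⟨h, _⟩); exacts [hc h, h]
    · intro h; by_cases hx : x ∈ A; exacts [Or.inl hx, Or.inr ⟨h, hx⟩]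
  rw [← h2]
  apply Finset.sum_nbij' (i := fun c => c \ A) (j := fun d => A ∪ d)
  · intro c hc
    simp only [Finset.mem_filter, Finset.mem_univ, true_and] at hc
    rw [Finset.mem_powerset]
    intro x hx
    simp only [Finset.mem_sdiff] at hx ⊢
    exact ⟨hc.2 hx.1, hx.2⟩
  · intro d hd
    rw [Finset.mem_powerset] at hd
    simp only [Finset.mem_filter, Finset.mem_univ, true_and]
    refine ⟨Finset.subset_union_left, fun x hx => ?_⟩
    rcases Finset.mem_union.mp hx with h | h
    · exact hA h
    · exact (Finset.mem_sdiff.mp (hd h)).1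
  · intro c hc
    simp only [Finset.mem_filter, Finset.mem_univ, true_and] at hc
    exact hun c hc.1
  · intro d hd
    rw [Finset.mem_powerset] at hd
    ext x; simp only [Finset.mem_sdiff, Finset.mem_union]
    constructor
    · rintro ⟨h | h, hA'⟩; exacts [absurd h hA', h]
    · intro h; exact ⟨Or.inr h, fun hx => (Finset.mem_sdiff.mp (hd h)).2 hx⟩
  · intro c hc
    simp only [Finset.mem_filter, Finset.mem_univ, true_and] at hc
    rw [hun c hc.1]

lemma fic_eq {n : ℕ} (hn : 0 < n) :
    fic (pathE n) (fun _ => 1 - 1 / (n : ℝ)) {(⟨0, hn⟩ : Fin n)}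
      = ∑ i ∈ Finset.range n, (1 - 1 / (n : ℝ)) ^ i := by
  classical
  unfold fic expInf
  have step1 : ∀ c : Finset (Fin n × Fin n),
      thetaIC (pathE n) (fun _ => 1 - 1 / (n : ℝ)) c * (R c {(⟨0, hn⟩ : Fin n)} : ℝ)
        = ∑ i : Fin n, thetaIC (pathE n) (fun _ => 1 - 1 / (n : ℝ)) c *
            (if Ai n i ⊆ c then (1 : ℝ) else 0) := by
    intro c
    by_cases hc : c ⊆ pathE n
    · rw [R_eq hn c hc, Finset.mul_sum]
    · simp [thetaIC, hc]
  rw [Finset.sum_congr rfl (fun c _ => step1 c), Finset.sum_comm]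
  have step2 : ∀ i : Fin n,
      (∑ c : Finset (Fin n × Fin n), thetaIC (pathE n) (fun _ => 1 - 1 / (n : ℝ)) c *
        (if Ai n i ⊆ c then (1 : ℝ) else 0)) = (1 - 1 / (n : ℝ)) ^ (i : ℕ) := by
    intro i
    rw [sum_thetaIC_subset (pathE n) (Ai n i) _ (Ai_subset n i), Finset.prod_const, card_Ai]
  rw [Finset.sum_congr rfl (fun i _ => step2 i), Fin.sum_univ_eq_sum_range]

lemma card_val_lt {n k : ℕ} (hk : k ≤ n) :
    (Finset.univ.filter (fun i : Fin n => (i : ℕ) < k)).card = k := by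
  classical
  have h : (Finset.univ.filter (fun i : Fin n => (i : ℕ) < k))
      = Finset.univ.filter (fun i : Fin n => (i : ℕ) ∈ Finset.range k) := by
    apply Finset.filter_congr; intro i _; simp
  rw [h, card_filter_val_mem]
  · exact Finset.card_range k
  · intro m hm; rw [Finset.mem_range] at hm; omega

lemma gauss (n : ℕ) (hn : 1 ≤ n) :
    ∑ i ∈ Finset.range n, (i : ℝ) = n * (n - 1) / 2 := by
  have h := Finset.sum_range_id_mul_two n
  have h2 := congrArg (fun m : ℕ => (m : ℝ)) h
  push_cast [Nat.cast_sub hn] at h2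
  linarith

/-- The `k`-th scenario of the worst-case distribution: all path edges except the
one whose head is `k` (for `k = 0`, all path edges). -/
def scen (n : ℕ) (k : ℕ) : Finset (Fin n × Fin n) :=
  (pathE n).filter (fun e => (e.2 : ℕ) ≠ k)

lemma scen_subset (n k : ℕ) : scen n k ⊆ pathE n := Finset.filter_subset _ _

/-- The worst-case distribution: uniform over the `n` scenarios `scen n k`. -/
noncomputable def thetaStar (n : ℕ) : Finset (Fin n × Fin n) → ℝ :=
  fun c => ∑ k ∈ Finset.range n, if c = scen n k then (1 / (n : ℝ)) else 0

lemma memTheta_thetaStar {n : ℕ} (hn : 2 ≤ n) :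
    memTheta (pathE n) (fun _ => 1 - 1 / (n : ℝ)) (thetaStar n) := by
  classical
  have hn0 : (n : ℝ) ≠ 0 := by positivity
  refine ⟨?_, ?_, ?_, ?_⟩
  · intro c
    apply Finset.sum_nonneg
    intro k _
    split <;> positivity
  · intro c hc
    by_contra hsub
    apply hc
    apply Finset.sum_eq_zero
    intro k _
    rw [if_neg]
    intro h
    exact hsub (h ▸ scen_subset n k)
  · unfold thetaStar
    rw [Finset.sum_comm]
    have : ∀ k ∈ Finset.range n,
        (∑ c : Finset (Fin n × Fin n), if c = scen n k then (1 / (n : ℝ)) else 0)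
          = 1 / (n : ℝ) := by
      intro k _
      rw [Finset.sum_ite_eq' Finset.univ (scen n k) (fun _ => (1 / (n : ℝ)))]
      simp
    rw [Finset.sum_congr rfl this, Finset.sum_const, Finset.card_range, nsmul_eq_mul]
    field_simp
  · intro e he
    have hval : (e.2 : ℕ) = (e.1 : ℕ) + 1 := mem_pathE'.mp he
    have h1 : ∀ c : Finset (Fin n × Fin n),
        (if e ∈ c then thetaStar n c else 0)
          = ∑ k ∈ Finset.range n, if c = scen n k then (if e ∈ scen n k then (1/(n:ℝ)) else 0) else 0 := by
      intro c
      by_cases hec : e ∈ c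
      · simp only [hec, if_true]
        unfold thetaStar
        apply Finset.sum_congr rfl
        intro k _
        by_cases hcs : c = scen n k
        · subst hcs; simp [hec]
        · simp [hcs]
      · simp only [hec, if_false]
        symm
        apply Finset.sum_eq_zero
        intro k _
        by_cases hcs : c = scen n k
        · subst hcs; simp [hec]
        · simp [hcs]
    rw [Finset.sum_congr rfl (fun c _ => h1 c), Finset.sum_comm]
    have h2 : ∀ k ∈ Finset.range n,
        (∑ c : Finset (Fin n × Fin n),
          if c = scen n k then (if e ∈ scen n k then (1/(n:ℝ)) else 0) else 0)
          = (1/(n:ℝ)) - (if k = (e.2 : ℕ) then (1/(n:ℝ)) else 0) := by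
      intro k _
      rw [Finset.sum_ite_eq' Finset.univ (scen n k)
        (fun _ => if e ∈ scen n k then (1/(n:ℝ)) else 0)]
      simp only [Finset.mem_univ, if_true]
      by_cases hk : k = (e.2 : ℕ)
      · have : e ∉ scen n k := by
          simp only [scen, Finset.mem_filter]
          intro h; exact h.2 hk.symm
        rw [if_neg this, if_pos hk]; ring
      · have : e ∈ scen n k := by
          simp only [scen, Finset.mem_filter]
          exact ⟨he, fun h => hk h.symm⟩
        rw [if_pos this, if_neg hk]; ring
    rw [Finset.sum_congr rfl h2, Finset.sum_sub_distrib, Finset.sum_const,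
      Finset.card_range, nsmul_eq_mul,
      Finset.sum_ite_eq' (Finset.range n) ((e.2 : ℕ)) (fun _ => (1/(n:ℝ)))]
    have hlt : (e.2 : ℕ) ∈ Finset.range n := by
      rw [Finset.mem_range]; exact e.2.isLt
    rw [if_pos hlt]
    field_simp

lemma R_scen {n : ℕ} (hn : 0 < n) (k : ℕ) (hk : k < n) :
    (R (scen n k) {(⟨0, hn⟩ : Fin n)} : ℝ) = if k = 0 then (n : ℝ) else (k : ℝ) := by
  classical
  rw [R_eq hn _ (scen_subset n k)]
  have hiff : ∀ i : Fin n, Ai n i ⊆ scen n k ↔ (k = 0 ∨ (i : ℕ) < k) := by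
    intro i
    constructor
    · intro h
      by_contra hcon
      push_neg at hcon
      obtain ⟨hk0, hki⟩ := hcon
      have hedge : ((⟨k - 1, by omega⟩ : Fin n), (⟨k, hk⟩ : Fin n)) ∈ Ai n i := by
        simp only [Ai, Finset.mem_filter]
        refine ⟨mem_pathE.mpr ?_, ?_⟩
        · show k = k - 1 + 1; omega
        · show k ≤ (i : ℕ); omega
      have := h hedge
      simp only [scen, Finset.mem_filter] at this
      exact this.2 rfl
    · intro h e heA
      simp only [Ai, Finset.mem_filter] at heA
      obtain ⟨heE, hle⟩ := heA
      have hval : (e.2 : ℕ) = (e.1 : ℕ) + 1 := mem_pathE'.mp heE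
      simp only [scen, Finset.mem_filter]
      refine ⟨heE, ?_⟩
      rcases h with h | h <;> omega
  have hcongr : ∀ i : Fin n,
      (if Ai n i ⊆ scen n k then (1 : ℝ) else 0)
        = if (k = 0 ∨ (i : ℕ) < k) then (1 : ℝ) else 0 := by
    intro i; exact if_congr (hiff i) rfl rfl
  rw [Finset.sum_congr rfl (fun i _ => hcongr i)]
  by_cases hk0 : k = 0
  · subst hk0
    simp
  · have : ∀ i : Fin n, (if (k = 0 ∨ (i : ℕ) < k) then (1 : ℝ) else 0)
        = if (i : ℕ) < k then (1 : ℝ) else 0 := by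
      intro i
      apply if_congr _ rfl rfl
      simp [hk0]
    rw [Finset.sum_congr rfl (fun i _ => this i), Finset.sum_boole,
      card_val_lt (le_of_lt hk)]
    simp [hk0]

lemma expInf_thetaStar {n : ℕ} (hn : 2 ≤ n) :
    expInf (thetaStar n) {(⟨0, Nat.zero_lt_two.trans_le hn⟩ : Fin n)} = 1 + ((n : ℝ) - 1) / 2 := by
  classical
  have hn0 : 0 < n := by omega
  have hne : (n : ℝ) ≠ 0 := by positivity
  unfold expInf thetaStar
  have h1 : ∀ c : Finset (Fin n × Fin n),
      (∑ k ∈ Finset.range n, if c = scen n k then (1 / (n : ℝ)) else 0) *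
          (R c {(⟨0, hn0⟩ : Fin n)} : ℝ)
        = ∑ k ∈ Finset.range n,
            (if c = scen n k then (1 / (n : ℝ)) * (R (scen n k) {(⟨0, hn0⟩ : Fin n)} : ℝ) else 0) := by
    intro c
    rw [Finset.sum_mul]
    apply Finset.sum_congr rfl
    intro k _
    by_cases hcs : c = scen n k
    · subst hcs; simp
    · simp [hcs]
  rw [Finset.sum_congr rfl (fun c _ => h1 c), Finset.sum_comm]
  have h2 : ∀ k ∈ Finset.range n,
      (∑ c : Finset (Fin n × Fin n),
        if c = scen n k then (1 / (n : ℝ)) * (R (scen n k) {(⟨0, hn0⟩ : Fin n)} : ℝ) else 0)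
        = (1 / (n : ℝ)) * (if k = 0 then (n : ℝ) else (k : ℝ)) := by
    intro k hk
    rw [Finset.mem_range] at hk
    rw [Finset.sum_ite_eq' Finset.univ (scen n k) _]
    simp only [Finset.mem_univ, if_true]
    rw [R_scen hn0 k hk]
  rw [Finset.sum_congr rfl h2, ← Finset.mul_sum]
  have h3 : ∑ k ∈ Finset.range n, (if k = 0 then (n : ℝ) else (k : ℝ))
      = (n : ℝ) + (n : ℝ) * ((n : ℝ) - 1) / 2 := by
    have : ∀ k ∈ Finset.range n, (if k = 0 then (n : ℝ) else (k : ℝ))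
        = (k : ℝ) + (if k = 0 then (n : ℝ) else 0) := by
      intro k _
      by_cases hk : k = 0 <;> simp [hk]
    rw [Finset.sum_congr rfl this, Finset.sum_add_distrib, gauss n (by omega),
      Finset.sum_ite_eq' (Finset.range n) 0 (fun _ => (n : ℝ))]
    rw [if_pos (by rw [Finset.mem_range]; omega)]
    ring
  rw [h3]
  field_simp

lemma expInf_lower {n : ℕ} (hn : 2 ≤ n) (θ : Finset (Fin n × Fin n) → ℝ)
    (hθ : memTheta (pathE n) (fun _ => 1 - 1 / (n : ℝ)) θ) :
    1 + ((n : ℝ) - 1) / 2 ≤ expInf θ {(⟨0, Nat.zero_lt_two.trans_le hn⟩ : Fin n)} := by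
  classical
  have h0 : 0 < n := by omega
  have hne : (n : ℝ) ≠ 0 := by positivity
  obtain ⟨hpos, hsupp, hsum, hmarg⟩ := hθ
  -- the pointwise lower bound on R
  have step1 : ∀ c : Finset (Fin n × Fin n),
      θ c * (∑ i : Fin n, ((1 : ℝ) - ∑ e ∈ Ai n i, (1 - if e ∈ c then (1 : ℝ) else 0)))
        ≤ θ c * (R c {(⟨0, h0⟩ : Fin n)} : ℝ) := by
    intro c
    by_cases hc0 : θ c = 0
    · simp [hc0]
    · apply mul_le_mul_of_nonneg_left _ (hpos c)
      rw [R_eq h0 c (hsupp c hc0)]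
      apply Finset.sum_le_sum
      intro i _
      by_cases hsub : Ai n i ⊆ c
      · rw [if_pos hsub]
        have hz : ∑ e ∈ Ai n i, ((1 : ℝ) - if e ∈ c then 1 else 0) = 0 :=
          Finset.sum_eq_zero (fun e he => by rw [if_pos (hsub he)]; ring)
        rw [hz]; norm_num
      · rw [if_neg hsub]
        obtain ⟨e0, he0A, he0c⟩ := Finset.not_subset.mp hsub
        have h1 : (1 : ℝ) ≤ ∑ e ∈ Ai n i, (1 - if e ∈ c then (1 : ℝ) else 0) := by
          have hs := Finset.single_le_sum
            (f := fun e => (1 : ℝ) - if e ∈ c then 1 else 0)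
            (fun e _ => by split <;> norm_num) he0A
          rw [if_neg he0c] at hs
          linarith
        linarith
  -- the expected value of the lower bound
  have key : ∀ i : Fin n,
      (∑ c : Finset (Fin n × Fin n),
        θ c * ((1 : ℝ) - ∑ e ∈ Ai n i, (1 - if e ∈ c then (1 : ℝ) else 0)))
        = 1 - (i : ℕ) * (1 / (n : ℝ)) := by
    intro i
    have expand : ∀ c : Finset (Fin n × Fin n),
        θ c * ((1 : ℝ) - ∑ e ∈ Ai n i, (1 - if e ∈ c then (1 : ℝ) else 0))
          = θ c - ∑ e ∈ Ai n i, (θ c - if e ∈ c then θ c else 0) := by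
      intro c
      rw [mul_sub, mul_one, Finset.mul_sum]
      congr 1
      apply Finset.sum_congr rfl
      intro e _
      rw [mul_sub, mul_one, mul_ite, mul_one, mul_zero]
    rw [Finset.sum_congr rfl (fun c _ => expand c), Finset.sum_sub_distrib, hsum]
    congr 1
    rw [Finset.sum_comm]
    have inner : ∀ e ∈ Ai n i,
        (∑ c : Finset (Fin n × Fin n), (θ c - if e ∈ c then θ c else 0)) = 1 / (n : ℝ) := by
      intro e he
      rw [Finset.sum_sub_distrib, hsum, hmarg e (Ai_subset n i he)]
      ring
    rw [Finset.sum_congr rfl inner, Finset.sum_const, card_Ai, nsmul_eq_mul]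
  have hswap : (∑ c : Finset (Fin n × Fin n),
      θ c * (∑ i : Fin n, ((1 : ℝ) - ∑ e ∈ Ai n i, (1 - if e ∈ c then (1 : ℝ) else 0))))
      = ∑ i : Fin n, (1 - (i : ℕ) * (1 / (n : ℝ))) := by
    have hms : ∀ c : Finset (Fin n × Fin n),
        θ c * (∑ i : Fin n, ((1 : ℝ) - ∑ e ∈ Ai n i, (1 - if e ∈ c then (1 : ℝ) else 0)))
          = ∑ i : Fin n,
              θ c * ((1 : ℝ) - ∑ e ∈ Ai n i, (1 - if e ∈ c then (1 : ℝ) else 0)) :=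
      fun c => Finset.mul_sum _ _ _
    rw [Finset.sum_congr rfl (fun c _ => hms c), Finset.sum_comm]
    exact Finset.sum_congr rfl (fun i _ => key i)
  have harith : (∑ i : Fin n, (1 - (i : ℕ) * (1 / (n : ℝ)))) = 1 + ((n : ℝ) - 1) / 2 := by
    rw [Fin.sum_univ_eq_sum_range (fun m => 1 - (m : ℝ) * (1 / (n : ℝ))) n,
      Finset.sum_sub_distrib, Finset.sum_const, Finset.card_range, nsmul_eq_mul, mul_one,
      ← Finset.sum_mul, gauss n (by omega)]
    field_simp
    ring
  calc 1 + ((n : ℝ) - 1) / 2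
      = ∑ i : Fin n, (1 - (i : ℕ) * (1 / (n : ℝ))) := harith.symm
    _ = ∑ c : Finset (Fin n × Fin n),
          θ c * (∑ i : Fin n, ((1 : ℝ) - ∑ e ∈ Ai n i, (1 - if e ∈ c then (1 : ℝ) else 0))) :=
        hswap.symm
    _ ≤ ∑ c : Finset (Fin n × Fin n), θ c * (R c {(⟨0, h0⟩ : Fin n)} : ℝ) :=
        Finset.sum_le_sum (fun c _ => step1 c)

lemma fcorr_eq {n : ℕ} (hn : 2 ≤ n) :
    fcorr (pathE n) (fun _ => 1 - 1 / (n : ℝ)) {(⟨0, Nat.zero_lt_two.trans_le hn⟩ : Fin n)}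
      = 1 + ((n : ℝ) - 1) / 2 := by
  have hmemT : (1 + ((n : ℝ) - 1) / 2) ∈
      {x : ℝ | ∃ θ, memTheta (pathE n) (fun _ => 1 - 1 / (n : ℝ)) θ ∧
        x = expInf θ {(⟨0, Nat.zero_lt_two.trans_le hn⟩ : Fin n)}} :=
    ⟨thetaStar n, memTheta_thetaStar hn, (expInf_thetaStar hn).symm⟩
  have hlb : ∀ x ∈ {x : ℝ | ∃ θ, memTheta (pathE n) (fun _ => 1 - 1 / (n : ℝ)) θ ∧
      x = expInf θ {(⟨0, Nat.zero_lt_two.trans_le hn⟩ : Fin n)}}, 1 + ((n : ℝ) - 1) / 2 ≤ x := by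
    rintro x ⟨θ, hθ, rfl⟩
    exact expInf_lower hn θ hθ
  exact le_antisymm (csInf_le ⟨_, hlb⟩ hmemT) (le_csInf ⟨_, hmemT⟩ hlb)


/-- on the directed path graph with `n ≥ 2` nodes, edges `(i, i+1)` and
identical edge likelihoods `1 - 1/n`, the seed set consisting of the first node has
`f^corr = 1 + (n-1)/2` and `f^ic = ∑_{i=0}^{n-1} (1 - 1/n)^i = n (1 - (1 - 1/n)^n)`. -/
theorem series_example (n : ℕ) (hn : 2 ≤ n) :
    fcorr (Finset.univ.filter (fun e : Fin n × Fin n => (e.2 : ℕ) = (e.1 : ℕ) + 1))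
        (fun _ => 1 - 1 / (n : ℝ)) {(⟨0, by omega⟩ : Fin n)} = 1 + ((n : ℝ) - 1) / 2 ∧
      fic (Finset.univ.filter (fun e : Fin n × Fin n => (e.2 : ℕ) = (e.1 : ℕ) + 1))
        (fun _ => 1 - 1 / (n : ℝ)) {(⟨0, by omega⟩ : Fin n)} =
          ∑ i ∈ Finset.range n, (1 - 1 / (n : ℝ)) ^ i ∧
      fic (Finset.univ.filter (fun e : Fin n × Fin n => (e.2 : ℕ) = (e.1 : ℕ) + 1))
        (fun _ => 1 - 1 / (n : ℝ)) {(⟨0, by omega⟩ : Fin n)} =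
          (n : ℝ) * (1 - (1 - 1 / (n : ℝ)) ^ n) := by
  have h0 : 0 < n := by omega
  have hne : (n : ℝ) ≠ 0 := by positivity
  have hficeq : fic (pathE n) (fun _ => 1 - 1 / (n : ℝ)) {(⟨0, h0⟩ : Fin n)}
      = ∑ i ∈ Finset.range n, (1 - 1 / (n : ℝ)) ^ i := fic_eq h0
  have hgeom : (∑ i ∈ Finset.range n, (1 - 1 / (n : ℝ)) ^ i)
      = (n : ℝ) * (1 - (1 - 1 / (n : ℝ)) ^ n) := by
    have hq : (1 - 1 / (n : ℝ)) ≠ 1 := by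
      have hp : (0 : ℝ) < 1 / n := by positivity
      intro hcon
      have : (1 : ℝ) / n = 0 := by linarith
      linarith
    rw [geom_sum_eq hq]
    have hd : (1 - 1 / (n : ℝ) - 1) = -(1 / (n : ℝ)) := by ring
    rw [hd]
    field_simp
    ring
  exact ⟨fcorr_eq hn, hficeq, hficeq.trans hgeom⟩


end CorrIM
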